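/- Let κ be a measurable cardinal with 2^κ = κ⁺, and let U be a normal measure on κ. Then U has an almost-decreasing generating sequence of length κ⁺. -/

import Mathlib

universe u

open Cardinal Set

/-- `A ⊆* B` below the cardinal `κ`: the difference `A \ B` is bounded below `κ`
(where `κ` is identified with its set of ordinals `Set.Iio κ.ord`). -/
def AlmostSub (κ : Cardinal.{u}) (A B : Set Ordinal.{u}) : Prop :=
  ∃ β, β < κ.ord ∧ A \ B ⊆ Set.Iio β

/-- An ultrafilter on the cardinal `κ`, identified with its set of ordinals `Set.Iio κ.ord`. -/
structure UltrafilterOn (κ : Cardinal.{u}) : Type (u + 1) where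
  sets : Set (Set Ordinal.{u})
  sets_subset : ∀ A ∈ sets, A ⊆ Set.Iio κ.ord
  univ_mem : Set.Iio κ.ord ∈ sets
  superset_mem : ∀ A ∈ sets, ∀ B, B ⊆ Set.Iio κ.ord → A ⊆ B → B ∈ sets
  inter_mem : ∀ A ∈ sets, ∀ B ∈ sets, A ∩ B ∈ sets
  empty_not_mem : ∅ ∉ sets
  mem_or_compl_mem : ∀ A, A ⊆ Set.Iio κ.ord → A ∈ sets ∨ Set.Iio κ.ord \ A ∈ sets

namespace UltrafilterOn

variable {κ : Cardinal.{u}}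

/-- A uniform ultrafilter: every member has cardinality `κ`. -/
def IsUniform (U : UltrafilterOn κ) : Prop :=
  ∀ A ∈ U.sets, #A = Cardinal.lift.{u + 1, u} κ

/-- `κ`-completeness: `U` is closed under intersections of fewer than `κ` many of its members. -/
def IsComplete (U : UltrafilterOn κ) : Prop :=
  ∀ S : Set (Set Ordinal.{u}), S.Nonempty → S ⊆ U.sets →
    #S < Cardinal.lift.{u + 1, u} κ → ⋂₀ S ∈ U.sets

/-- Nonprincipal: no singleton is a member. -/
def IsNonprincipal (U : UltrafilterOn κ) : Prop :=
  ∀ β : Ordinal.{u}, {β} ∉ U.sets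

/-- A base for `U`: a subfamily `B ⊆ U` such that every member of `U` almost contains
a member of `B`. -/
def IsBase (U : UltrafilterOn κ) (B : Set (Set Ordinal.{u})) : Prop :=
  B ⊆ U.sets ∧ ∀ X ∈ U.sets, ∃ Y ∈ B, AlmostSub κ Y X

/-- The character of `U`: the least cardinality of a base for `U`. -/
noncomputable def char (U : UltrafilterOn κ) : Cardinal.{u + 1} :=
  sInf {c | ∃ B, U.IsBase B ∧ #B = c}

/-- `⟨A i : i < θord⟩` is an almost-decreasing generating sequence for `U`:
its entries are members of `U`, it is `⊆*`-decreasing, and its range is a base for `U`. -/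
def IsADGenSeq (U : UltrafilterOn κ) (θord : Ordinal.{u})
    (A : Ordinal.{u} → Set Ordinal.{u}) : Prop :=
  (∀ i, i < θord → A i ∈ U.sets) ∧
  (∀ i j, i ≤ j → j < θord → AlmostSub κ (A j) (A i)) ∧
  U.IsBase (A '' Set.Iio θord)

/-- A normal measure on `κ`: a `κ`-complete nonprincipal ultrafilter such that every
function regressive on a member of `U` is constant on a member of `U`. -/
def IsNormalMeasure (U : UltrafilterOn κ) : Prop :=
  U.IsComplete ∧ U.IsNonprincipal ∧
  ∀ f : Ordinal.{u} → Ordinal.{u},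
    (∃ X ∈ U.sets, ∀ α ∈ X, f α < α) → ∃ Y ∈ U.sets, ∃ c, ∀ α ∈ Y, f α = c

end UltrafilterOn

/-- `κ` is a measurable cardinal: it is uncountable and carries a `κ`-complete
nonprincipal ultrafilter. -/
def IsMeasurableCard (κ : Cardinal.{u}) : Prop :=
  ℵ₀ < κ ∧ ∃ U : UltrafilterOn κ, U.IsComplete ∧ U.IsNonprincipal

/-- `f <* g`: eventual (pointwise) domination below `ρord`. -/
def EvDomLt (ρord : Ordinal.{u}) (f g : Ordinal.{u} → Ordinal.{u}) : Prop :=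
  ∃ i₀, i₀ < ρord ∧ ∀ i, i₀ ≤ i → i < ρord → f i < g i

/-- Membership in the product `∏_{i < ρord} lam i` (of cardinals `lam i`). -/
def InProd (ρord : Ordinal.{u}) (lam : Ordinal.{u} → Cardinal.{u})
    (f : Ordinal.{u} → Ordinal.{u}) : Prop :=
  ∀ i, i < ρord → f i < (lam i).ord

/-- `⟨g η : η < ν⟩` is a scale of length `ν` in `∏_{i < ρord} lam i`:
a `<*`-increasing and `<*`-cofinal sequence in the product. -/
def IsScale (ρord : Ordinal.{u}) (lam : Ordinal.{u} → Cardinal.{u}) (ν : Cardinal.{u})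
    (g : Ordinal.{u} → Ordinal.{u} → Ordinal.{u}) : Prop :=
  (∀ η, η < ν.ord → InProd ρord lam (g η)) ∧
  (∀ η₁ η₂, η₁ < η₂ → η₂ < ν.ord → EvDomLt ρord (g η₁) (g η₂)) ∧
  ∀ f, InProd ρord lam f → ∃ η, η < ν.ord ∧ EvDomLt ρord f (g η)

/-- `supBelow μ i = sup_{i' < i} μ i'`. -/
noncomputable def supBelow (μ : Ordinal.{u} → Cardinal.{u}) (i : Ordinal.{u}) : Cardinal.{u} :=
  sSup {c | ∃ i', i' < i ∧ c = μ i'}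

section MyAux

variable {κ : Cardinal.{u}}

theorem myAlmostSub_of_subset (h0 : (0 : Ordinal.{u}) < κ.ord) {A B : Set Ordinal.{u}}
    (h : A ⊆ B) : AlmostSub κ A B :=
  ⟨0, h0, by rw [Set.diff_eq_empty.2 h]; exact Set.empty_subset _⟩

theorem myAlmostSub_mono {A A' B : Set Ordinal.{u}} (h : A' ⊆ A) (hAB : AlmostSub κ A B) :
    AlmostSub κ A' B := by
  obtain ⟨β, hβ, hsub⟩ := hAB
  exact ⟨β, hβ, fun x hx => hsub ⟨h hx.1, hx.2⟩⟩

theorem myDiagonal (U : UltrafilterOn κ) (hU : U.IsNormalMeasure)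
    (B : Ordinal.{u} → Set Ordinal.{u}) (hB : ∀ α < κ.ord, B α ∈ U.sets) :
    {β | β < κ.ord ∧ ∀ α < β, β ∈ B α} ∈ U.sets := by
  classical
  set D := {β | β < κ.ord ∧ ∀ α < β, β ∈ B α} with hDdef
  have hDsub : D ⊆ Set.Iio κ.ord := fun β hβ => hβ.1
  rcases U.mem_or_compl_mem D hDsub with h | h
  · exact h
  exfalso
  set C := Set.Iio κ.ord \ D with hC
  set f : Ordinal.{u} → Ordinal.{u} := fun β =>
    if h : ∃ α, α < β ∧ β ∉ B α then h.choose else 0 with hf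
  have hreg : ∀ β ∈ C, f β < β ∧ β ∉ B (f β) := by
    intro β hβ
    have hβκ : β < κ.ord := hβ.1
    have hex : ∃ α, α < β ∧ β ∉ B α := by
      by_contra hno
      push_neg at hno
      exact hβ.2 ⟨hβκ, fun α hα => hno α hα⟩
    have hfβ : f β = hex.choose := by rw [hf]; exact dif_pos hex
    rw [hfβ]
    exact ⟨hex.choose_spec.1, hex.choose_spec.2⟩
  obtain ⟨Y, hY, c, hc⟩ := hU.2.2 f ⟨C, h, fun β hβ => (hreg β hβ).1⟩
  have hY' : Y ∩ C ∈ U.sets := U.inter_mem Y hY C h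
  have hne : (Y ∩ C).Nonempty := by
    rw [Set.nonempty_iff_ne_empty]
    intro he
    exact U.empty_not_mem (he ▸ hY')
  obtain ⟨β₀, hβ₀⟩ := hne
  have hcβ : c < β₀ := by
    rw [← hc β₀ hβ₀.1]
    exact (hreg β₀ hβ₀.2).1
  have hcκ : c < κ.ord := hcβ.trans hβ₀.2.1
  have hZ : Y ∩ C ∩ B c ∈ U.sets := U.inter_mem _ hY' _ (hB c hcκ)
  have hempty : Y ∩ C ∩ B c = ∅ := by
    ext β
    simp only [Set.mem_inter_iff, Set.mem_empty_iff_false, iff_false, not_and]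
    intro hβ hβB
    refine (hreg β hβ.2).2 ?_
    rw [hc β hβ.1]
    exact hβB
  exact U.empty_not_mem (hempty ▸ hZ)

theorem myPseudo (U : UltrafilterOn κ) (hU : U.IsNormalMeasure) (hκ : ℵ₀ ≤ κ)
    (η : Ordinal.{u}) (hη : η.card ≤ κ) (A : Ordinal.{u} → Set Ordinal.{u})
    (hA : ∀ ξ < η, A ξ ∈ U.sets) :
    ∃ D ∈ U.sets, ∀ ξ < η, AlmostSub κ D (A ξ) := by
  classical
  rcases eq_or_lt_of_le (zero_le (a := η)) with h0 | h0
  · exact ⟨Set.Iio κ.ord, U.univ_mem,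
      fun ξ hξ => absurd hξ (by rw [← h0]; exact not_lt_zero (a := ξ))⟩
  have hcard : #(Set.Iio η : Set Ordinal.{u}) ≤ #(Set.Iio κ.ord : Set Ordinal.{u}) := by
    rw [Ordinal.mk_Iio_ordinal, Ordinal.mk_Iio_ordinal, Cardinal.card_ord]
    exact Cardinal.lift_le.2 hη
  obtain ⟨i⟩ := Cardinal.le_def _ _ |>.1 hcard
  set e : Ordinal.{u} → Ordinal.{u} := fun α =>
    if h : ∃ ξ : (Set.Iio η : Set Ordinal.{u}), ((i ξ : (Set.Iio κ.ord : Set Ordinal.{u})) : Ordinal.{u}) = α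
    then ((h.choose : (Set.Iio η : Set Ordinal.{u})) : Ordinal.{u}) else 0 with he
  have he_lt : ∀ α, e α < η := by
    intro α
    rw [he]
    by_cases h : ∃ ξ : (Set.Iio η : Set Ordinal.{u}), ((i ξ : (Set.Iio κ.ord : Set Ordinal.{u})) : Ordinal.{u}) = α
    · simp only [dif_pos h]; exact h.choose.2
    · simp only [dif_neg h]; exact h0
  have he_surj : ∀ ξ, ξ < η → ∃ α, α < κ.ord ∧ e α = ξ := by
    intro ξ hξ
    refine ⟨(i ⟨ξ, hξ⟩ : (Set.Iio κ.ord : Set Ordinal.{u})), (i ⟨ξ, hξ⟩).2, ?_⟩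
    have h : ∃ ξ' : (Set.Iio η : Set Ordinal.{u}),
        ((i ξ' : (Set.Iio κ.ord : Set Ordinal.{u})) : Ordinal.{u}) = (i ⟨ξ, hξ⟩ : (Set.Iio κ.ord : Set Ordinal.{u})) :=
      ⟨⟨ξ, hξ⟩, rfl⟩
    rw [he]
    simp only [dif_pos h]
    have := h.choose_spec
    have heq : h.choose = (⟨ξ, hξ⟩ : (Set.Iio η : Set Ordinal.{u})) :=
      i.injective (Subtype.ext this)
    rw [heq]
  have hD : {β | β < κ.ord ∧ ∀ α < β, β ∈ A (e α)} ∈ U.sets :=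
    myDiagonal U hU (fun α => A (e α)) (fun α _ => hA (e α) (he_lt α))
  refine ⟨_, hD, ?_⟩
  intro ξ hξ
  obtain ⟨α, hακ, hαe⟩ := he_surj ξ hξ
  refine ⟨α + 1, by rw [Ordinal.add_one_eq_succ]; exact (Cardinal.isSuccLimit_ord hκ).succ_lt hακ, ?_⟩
  intro β hβ
  by_contra hβα
  simp only [Set.mem_Iio, not_lt] at hβα
  have hαβ : α < β := lt_of_lt_of_le (Order.lt_succ α) hβα
  exact hβ.2 (by rw [← hαe]; exact hβ.1.2 α hαβ)

end MyAux

/-- if `κ` is measurable, `2^κ = κ⁺`, and `U` is a normal measure on `κ`,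
then `U` has an almost-decreasing generating sequence of length `κ⁺`. -/
theorem statement7 (κ : Cardinal.{u}) (hκ : IsMeasurableCard κ)
    (h2 : 2 ^ κ = Order.succ κ)
    (U : UltrafilterOn κ) (hU : U.IsNormalMeasure) :
    ∃ A : Ordinal.{u} → Set Ordinal.{u}, U.IsADGenSeq (Order.succ κ).ord A := by
  classical
  have hκinf : ℵ₀ ≤ κ := hκ.1.le
  have hord0 : (0 : Ordinal.{u}) < κ.ord := (Cardinal.isSuccLimit_ord hκinf).pos
  set θ := (Order.succ κ).ord with hθ
  -- enumeration of U.sets by ordinals below θ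
  have hUcard : #U.sets ≤ #(Set.Iio θ : Set Ordinal.{u}) := by
    have h1 : #U.sets ≤ #(Set ((Set.Iio κ.ord : Set Ordinal.{u}))) := by
      refine Cardinal.mk_le_of_injective
        (f := fun S => {x : (Set.Iio κ.ord : Set Ordinal.{u}) | (x : Ordinal.{u}) ∈ (S : Set Ordinal.{u})}) ?_
      intro S T hST
      apply Subtype.ext
      ext x
      constructor
      · intro hx
        have hxκ : x ∈ Set.Iio κ.ord := U.sets_subset S.1 S.2 hx
        have := Set.ext_iff.1 hST ⟨x, hxκ⟩
        exact this.1 hx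
      · intro hx
        have hxκ : x ∈ Set.Iio κ.ord := U.sets_subset T.1 T.2 hx
        have := Set.ext_iff.1 hST ⟨x, hxκ⟩
        exact this.2 hx
    have h2' : #(Set ((Set.Iio κ.ord : Set Ordinal.{u}))) = #(Set.Iio θ : Set Ordinal.{u}) := by
      rw [Cardinal.mk_set, Ordinal.mk_Iio_ordinal, Ordinal.mk_Iio_ordinal,
        Cardinal.card_ord, Cardinal.card_ord, ← Cardinal.lift_two.{u+1, u},
        ← Cardinal.lift_power, h2]
    rw [← h2']
    exact h1
  obtain ⟨i⟩ := (Cardinal.le_def _ _).1 hUcard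
  set X : Ordinal.{u} → Set Ordinal.{u} := fun ηo =>
    if h : ∃ S : U.sets, ((i S : (Set.Iio θ : Set Ordinal.{u})) : Ordinal.{u}) = ηo
    then (h.choose : Set Ordinal.{u}) else Set.Iio κ.ord with hX
  have hXmem : ∀ ηo, X ηo ∈ U.sets := by
    intro ηo
    rw [hX]
    by_cases h : ∃ S : U.sets, ((i S : (Set.Iio θ : Set Ordinal.{u})) : Ordinal.{u}) = ηo
    · simp only [dif_pos h]; exact h.choose.2
    · simp only [dif_neg h]; exact U.univ_mem
  have hXsurj : ∀ S ∈ U.sets, ∃ ηo, ηo < θ ∧ X ηo = S := by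
    intro S hS
    refine ⟨(i ⟨S, hS⟩ : (Set.Iio θ : Set Ordinal.{u})), (i ⟨S, hS⟩).2, ?_⟩
    have h : ∃ S' : U.sets,
        ((i S' : (Set.Iio θ : Set Ordinal.{u})) : Ordinal.{u}) = (i ⟨S, hS⟩ : (Set.Iio θ : Set Ordinal.{u})) :=
      ⟨⟨S, hS⟩, rfl⟩
    rw [hX]
    simp only [dif_pos h]
    have heq : h.choose = (⟨S, hS⟩ : U.sets) := i.injective (Subtype.ext h.choose_spec)
    rw [heq]
  -- recursive construction
  set F : ∀ ηo : Ordinal.{u}, (∀ ξ, ξ < ηo → Set Ordinal.{u}) → Set Ordinal.{u} :=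
    fun ηo IH => Classical.epsilon
      (fun D => D ∈ U.sets ∧ D ⊆ X ηo ∧ ∀ ξ, ∀ h : ξ < ηo, AlmostSub κ D (IH ξ h)) with hF
  set A : Ordinal.{u} → Set Ordinal.{u} := Ordinal.lt_wf.fix F with hA
  have hfix : ∀ ηo, A ηo = Classical.epsilon
      (fun D => D ∈ U.sets ∧ D ⊆ X ηo ∧ ∀ ξ, ξ < ηo → AlmostSub κ D (A ξ)) := by
    intro ηo
    rw [hA]
    exact Ordinal.lt_wf.fix_eq F ηo
  have key : ∀ ηo, ηo < θ →
      A ηo ∈ U.sets ∧ A ηo ⊆ X ηo ∧ ∀ ξ, ξ < ηo → AlmostSub κ (A ηo) (A ξ) := by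
    intro ηo
    induction ηo using Ordinal.induction with
    | h ηo IH =>
      intro hηo
      have hcard : ηo.card ≤ κ := Order.lt_succ_iff.1 (Cardinal.lt_ord.1 hηo)
      obtain ⟨D, hD, hDsub⟩ := myPseudo U hU hκinf ηo hcard A
        (fun ξ hξ => (IH ξ hξ (hξ.trans hηo)).1)
      have hex : ∃ D', D' ∈ U.sets ∧ D' ⊆ X ηo ∧ ∀ ξ, ξ < ηo → AlmostSub κ D' (A ξ) :=
        ⟨D ∩ X ηo, U.inter_mem D hD _ (hXmem ηo), Set.inter_subset_right,
          fun ξ hξ => myAlmostSub_mono Set.inter_subset_left (hDsub ξ hξ)⟩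
      rw [hfix ηo]
      exact Classical.epsilon_spec hex
  refine ⟨A, fun i0 hi0 => (key i0 hi0).1, ?_, ?_, ?_⟩
  · intro i0 j hij hj
    rcases eq_or_lt_of_le hij with h | h
    · subst h
      exact myAlmostSub_of_subset hord0 (le_refl _)
    · exact (key j hj).2.2 i0 h
  · rintro a ⟨i0, hi0, rfl⟩
    exact (key i0 hi0).1
  · intro Xs hXs
    obtain ⟨ηo, hηθ, hXe⟩ := hXsurj Xs hXs
    refine ⟨A ηo, ⟨ηo, hηθ, rfl⟩, myAlmostSub_of_subset hord0 ?_⟩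
    rw [← hXe]
    exact (key ηo hηθ).2.1
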